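/- In the party list case, with the proportional satisfaction function f(n) = Σ_{k=1}^n 1/k, a set S ⊆ C with |S| = M is a possible outcome of Thiele's optimization method if and only if the seat numbers m_j = |S ∩ L_j| form a D'Hondt allocation of M seats to the vote totals v_1,…,v_p. In particular, Thiele's optimization method distributes the seats between the parties exactly as D'Hondt's method. -/

import Mathlib

open Finset

/-- Total satisfaction `F(S) = Σ_σ v_σ · f(|σ ∩ S|)`. -/
noncomputable def thieleF {C : Type} [Fintype C] [DecidableEq C]
    (f : ℕ → ℝ) (v : Finset C → ℕ) (S : Finset C) : ℝ :=
  ∑ σ : Finset C, (v σ : ℝ) * f ((σ ∩ S).card)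

/-- `S` is a possible outcome of Thiele's optimization method with satisfaction
function `f` for `M` seats. -/
def ThieleOptOutcome {C : Type} [Fintype C] [DecidableEq C]
    (f : ℕ → ℝ) (v : Finset C → ℕ) (M : ℕ) (S : Finset C) : Prop :=
  S.card = M ∧ ∀ T : Finset C, T.card = M → thieleF f v T ≤ thieleF f v S

/-- The proportional satisfaction function `f(n) = Σ_{k=1}^n 1/k`. -/
noncomputable def harm (n : ℕ) : ℝ := ∑ k ∈ Finset.range n, (1 : ℝ) / (k + 1)

/-- The party-list profile: party `j` receives `v j` ballots, each equal to its list `L j`. -/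
def partyProfile {C : Type} [Fintype C] [DecidableEq C] {p : ℕ}
    (L : Fin p → Finset C) (v : Fin p → ℕ) : Finset C → ℕ :=
  fun σ => ∑ j, if σ = L j then v j else 0

/-- `m` is a D'Hondt allocation of `M` seats to the vote totals `v`. -/
def IsDHondt {p : ℕ} (v : Fin p → ℕ) (M : ℕ) (m : Fin p → ℕ) : Prop :=
  (∑ j, m j) = M ∧
  ∀ j k : Fin p, 1 ≤ m k → (v j : ℚ) / ((m j : ℚ) + 1) ≤ (v k : ℚ) / (m k : ℚ)

lemma harm_succ (n : ℕ) : harm (n+1) = harm n + 1/((n:ℝ)+1) := by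
  simp [harm, Finset.sum_range_succ]

lemma div_le_div_nat {K : Type*} [Field K] [LinearOrder K] [IsStrictOrderedRing K] {a b c d : ℕ} (hb : 0 < b) (hd : 0 < d) :
    ((a:K)/b ≤ (c:K)/d) ↔ a * d ≤ c * b := by
  rw [div_le_div_iff₀ (by exact_mod_cast hb) (by exact_mod_cast hd)]
  constructor <;> intro h <;> exact_mod_cast h

lemma harm_sub_le {a b : ℕ} (h : a ≤ b) :
    harm b - harm a ≤ ((b:ℝ) - a) / ((a:ℝ)+1) := by
  rw [show harm b - harm a = ∑ k ∈ Finset.Ico a b, (1:ℝ)/(k+1) from (Finset.sum_Ico_eq_sub _ h).symm]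
  have := Finset.sum_le_card_nsmul (Finset.Ico a b) (fun k => (1:ℝ)/(k+1)) (1/((a:ℝ)+1)) ?_
  · simpa [Nat.card_Ico, div_eq_mul_inv, Nat.cast_sub h, sub_mul] using this
  · intro k hk
    rw [Finset.mem_Ico] at hk
    apply one_div_le_one_div_of_le (by positivity)
    have : (a:ℝ) ≤ k := by exact_mod_cast hk.1
    linarith

lemma le_harm_sub {a b : ℕ} (h : a ≤ b) (hb : 0 < b) :
    ((b:ℝ) - a) / (b:ℝ) ≤ harm b - harm a := by
  rw [show harm b - harm a = ∑ k ∈ Finset.Ico a b, (1:ℝ)/(k+1) from (Finset.sum_Ico_eq_sub _ h).symm]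
  have := Finset.card_nsmul_le_sum (Finset.Ico a b) (fun k => (1:ℝ)/(k+1)) (1/(b:ℝ)) ?_
  · simpa [Nat.card_Ico, div_eq_mul_inv, Nat.cast_sub h, sub_mul] using this
  · intro k hk
    rw [Finset.mem_Ico] at hk
    apply one_div_le_one_div_of_le (by positivity)
    have : k + 1 ≤ b := hk.2
    exact_mod_cast this

lemma dhondt_max {p : ℕ} (v m m' : Fin p → ℕ) (hv : ∀ j, 0 < v j)
    (hsum : ∑ j, m' j = ∑ j, m j) (hne : ∃ k, 1 ≤ m k)
    (hdh : ∀ j k, 1 ≤ m k → v j * m k ≤ v k * (m j + 1)) :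
    ∑ j, (v j:ℝ) * harm (m' j) ≤ ∑ j, (v j:ℝ) * harm (m j) := by
  classical
  obtain ⟨k1, hk1⟩ := hne
  set t : Finset (Fin p) := Finset.univ.filter (fun k => 1 ≤ m k) with ht
  have htne : t.Nonempty := ⟨k1, by simp [ht, hk1]⟩
  obtain ⟨k0, hk0t, hk0min⟩ := Finset.exists_min_image t (fun k => (v k:ℝ)/(m k)) htne
  have hk0 : 1 ≤ m k0 := by simpa [ht] using hk0t
  set α : ℝ := (v k0:ℝ)/(m k0) with hα
  have hαpos : 0 < α := by
    apply div_pos (by exact_mod_cast hv k0) (by exact_mod_cast hk0)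
  -- all quotients v j/(m j + 1) are ≤ α
  have hub : ∀ j, (v j:ℝ)/((m j:ℝ)+1) ≤ α := by
    intro j
    have := hdh j k0 hk0
    rw [hα, show ((m j:ℝ)+1) = ((m j + 1 : ℕ):ℝ) by push_cast; ring]
    exact (div_le_div_nat (Nat.succ_pos _) hk0).mpr this
  have hlb : ∀ j, 1 ≤ m j → α ≤ (v j:ℝ)/(m j) := by
    intro j hj
    exact hk0min j (by simp [ht, hj])
  have key : ∀ j, (v j:ℝ) * harm (m' j) - (v j:ℝ) * harm (m j) ≤ ((m' j:ℝ) - m j) * α := by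
    intro j
    rcases le_or_gt (m j) (m' j) with h | h
    · have h1 := harm_sub_le h
      have h2 := hub j
      have hvj : (0:ℝ) < v j := by exact_mod_cast hv j
      have hd : (0:ℝ) < (m j:ℝ) + 1 := by positivity
      have hc : (0:ℝ) ≤ (m' j:ℝ) - m j := by
        have : (m j:ℝ) ≤ m' j := by exact_mod_cast h
        linarith
      calc (v j:ℝ) * harm (m' j) - (v j:ℝ) * harm (m j)
          = (v j:ℝ) * (harm (m' j) - harm (m j)) := by ring
        _ ≤ (v j:ℝ) * (((m' j:ℝ) - m j) / ((m j:ℝ)+1)) := by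
            exact mul_le_mul_of_nonneg_left h1 (le_of_lt hvj)
        _ = ((m' j:ℝ) - m j) * ((v j:ℝ)/((m j:ℝ)+1)) := by ring
        _ ≤ ((m' j:ℝ) - m j) * α := mul_le_mul_of_nonneg_left h2 hc
    · have hj1 : 1 ≤ m j := lt_of_le_of_lt (Nat.zero_le _) h
      have h1 := le_harm_sub (le_of_lt h) hj1
      have h2 := hlb j hj1
      have hvj : (0:ℝ) < v j := by exact_mod_cast hv j
      have hmj : (0:ℝ) < (m j:ℝ) := by exact_mod_cast hj1
      have hc : (0:ℝ) ≤ (m j:ℝ) - m' j := by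
        have : (m' j:ℝ) ≤ m j := by exact_mod_cast le_of_lt h
        linarith
      have : ((m j:ℝ) - m' j) * α ≤ ((m j:ℝ) - m' j) * ((v j:ℝ)/(m j)) :=
        mul_le_mul_of_nonneg_left h2 hc
      have h3 : (v j:ℝ) * (harm (m j) - harm (m' j)) ≥ ((m j:ℝ) - m' j) * ((v j:ℝ)/(m j)) := by
        calc ((m j:ℝ) - m' j) * ((v j:ℝ)/(m j)) = (v j:ℝ) * (((m j:ℝ) - m' j)/(m j)) := by ring
          _ ≤ (v j:ℝ) * (harm (m j) - harm (m' j)) := mul_le_mul_of_nonneg_left h1 (le_of_lt hvj)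
      nlinarith
  calc ∑ j, (v j:ℝ) * harm (m' j)
      ≤ ∑ j, ((v j:ℝ) * harm (m j) + ((m' j:ℝ) - m j) * α) := by
        apply Finset.sum_le_sum; intro j _; linarith [key j]
    _ = ∑ j, (v j:ℝ) * harm (m j) + ((∑ j, (m' j:ℝ)) - ∑ j, (m j:ℝ)) * α := by
        rw [Finset.sum_add_distrib, ← Finset.sum_mul, Finset.sum_sub_distrib, sub_mul]
    _ = ∑ j, (v j:ℝ) * harm (m j) := by
        have : (∑ j, (m' j:ℝ)) = ∑ j, (m j:ℝ) := by exact_mod_cast hsum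
        rw [this]; ring

lemma thieleF_party {C : Type} [Fintype C] [DecidableEq C] {p : ℕ}
    (L : Fin p → Finset C) (v : Fin p → ℕ) (f : ℕ → ℝ) (S : Finset C) :
    thieleF f (partyProfile L v) S = ∑ j, (v j : ℝ) * f ((S ∩ L j).card) := by
  unfold thieleF partyProfile
  have : ∀ σ : Finset C, ((∑ j, if σ = L j then v j else 0 : ℕ) : ℝ) * f ((σ ∩ S).card)
      = ∑ j, if σ = L j then (v j : ℝ) * f ((σ ∩ S).card) else 0 := by
    intro σ
    push_cast
    rw [Finset.sum_mul]
    apply Finset.sum_congr rfl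
    intro j _
    split <;> simp
  simp_rw [this]
  rw [Finset.sum_comm]
  apply Finset.sum_congr rfl
  intro j _
  rw [Finset.sum_ite_eq' Finset.univ (L j) (fun σ => (v j : ℝ) * f ((σ ∩ S).card))]
  simp [Finset.inter_comm]

lemma card_sum_parts {C : Type} [Fintype C] [DecidableEq C] {p : ℕ}
    (L : Fin p → Finset C)
    (hdisj : ∀ j k : Fin p, j ≠ k → Disjoint (L j) (L k))
    (hcover : ∀ c : C, ∃ j, c ∈ L j) (S : Finset C) :
    ∑ j, (S ∩ L j).card = S.card := by
  classical
  rw [← Finset.card_biUnion]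
  · congr 1
    ext c
    simp only [Finset.mem_biUnion, Finset.mem_univ, true_and, Finset.mem_inter]
    constructor
    · rintro ⟨j, hc, _⟩; exact hc
    · intro hc; obtain ⟨j, hj⟩ := hcover c; exact ⟨j, hc, hj⟩
  · intro j _ k _ hjk
    exact Finset.disjoint_of_subset_left (Finset.inter_subset_right)
      (Finset.disjoint_of_subset_right (Finset.inter_subset_right) (hdisj j k hjk))

lemma exists_S {C : Type} [Fintype C] [DecidableEq C] {p : ℕ}
    (L : Fin p → Finset C)
    (hdisj : ∀ j k : Fin p, j ≠ k → Disjoint (L j) (L k))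
    (m : Fin p → ℕ) (hle : ∀ j, m j ≤ (L j).card) :
    ∃ S : Finset C, ∀ j, (S ∩ L j).card = m j := by
  classical
  choose t ht1 ht2 using fun j => Finset.exists_subset_card_eq (hle j)
  refine ⟨Finset.univ.biUnion t, fun j => ?_⟩
  rw [show Finset.univ.biUnion t ∩ L j = t j from ?_]
  · exact ht2 j
  ext c
  simp only [Finset.mem_inter, Finset.mem_biUnion, Finset.mem_univ, true_and]
  constructor
  · rintro ⟨⟨k, hck⟩, hcj⟩
    rcases eq_or_ne k j with rfl | hne
    · exact hck
    · exact absurd hcj (Finset.disjoint_left.mp (hdisj k j hne) (ht1 k hck))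
  · intro hc
    exact ⟨⟨j, hc⟩, ht1 j hc⟩

/-- In the party list case, a set `S` with `|S| = M` is a possible outcome of Thiele's
optimization method with the proportional satisfaction function if and only if the seat
numbers `m j = |S ∩ L j|` form a D'Hondt allocation of `M` seats to `v 1, …, v p`. -/
theorem stmt_2 {C : Type} [Fintype C] [DecidableEq C] (M : ℕ)
    (hM1 : 1 ≤ M) (hM2 : M ≤ Fintype.card C)
    (p : ℕ) (L : Fin p → Finset C) (v : Fin p → ℕ)
    (hdisj : ∀ j k : Fin p, j ≠ k → Disjoint (L j) (L k))
    (hcover : ∀ c : C, ∃ j, c ∈ L j)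
    (hsize : ∀ j, M ≤ (L j).card)
    (hv : ∀ j, 0 < v j) :
    ∀ S : Finset C, S.card = M →
      (ThieleOptOutcome harm (partyProfile L v) M S ↔
        IsDHondt v M (fun j => (S ∩ L j).card)) := by
  intro S hS
  set m : Fin p → ℕ := fun j => (S ∩ L j).card with hm
  have hsumM : ∑ j, m j = M := by rw [hm]; rw [card_sum_parts L hdisj hcover S, hS]
  constructor
  · rintro ⟨-, hopt⟩
    refine ⟨hsumM, ?_⟩
    intro j k hk
    -- reduce to the ℕ cross-multiplied inequality
    have hmk : 0 < m k := hk
    rw [show ((m j : ℚ) + 1) = ((m j + 1 : ℕ) : ℚ) by push_cast; ring]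
    rw [div_le_div_nat (Nat.succ_pos _) hmk]
    rcases eq_or_ne j k with rfl | hjk
    · exact Nat.mul_le_mul_left _ (Nat.le_succ _)
    -- j ≠ k : exchange argument
    · have hmjM : m j < M := by
        have hle : m j ≤ M := by
          rw [hm]
          exact le_trans (Finset.card_le_card Finset.inter_subset_left) (le_of_eq hS)
        rcases lt_or_eq_of_le hle with h | h
        · exact h
        · exfalso
          have h2 : m j + m k ≤ ∑ i, m i := by
            rw [← Finset.sum_pair hjk]
            exact Finset.sum_le_sum_of_subset (Finset.subset_univ _)
          rw [hsumM] at h2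
          omega
      have hss : S ∩ L j ⊂ L j := by
        rw [Finset.ssubset_iff_subset_ne]
        refine ⟨Finset.inter_subset_right, fun h => ?_⟩
        have : m j = (L j).card := by show (S ∩ L j).card = (L j).card; rw [h]
        have := hsize j
        omega
      obtain ⟨c, hcLj, hcn⟩ := Finset.exists_of_ssubset hss
      have hcS : c ∉ S := fun h => hcn (Finset.mem_inter.mpr ⟨h, hcLj⟩)
      obtain ⟨d, hd⟩ := Finset.card_pos.mp hmk
      have hdS : d ∈ S := (Finset.mem_inter.mp hd).1
      have hdLk : d ∈ L k := (Finset.mem_inter.mp hd).2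
      set T : Finset C := insert c (S.erase d) with hT
      have hcT : c ∉ S.erase d := fun h => hcS (Finset.mem_of_mem_erase h)
      have hTcard : T.card = M := by
        rw [hT, Finset.card_insert_of_notMem hcT, Finset.card_erase_of_mem hdS, hS]
        omega
      have hdis : ∀ i i' : Fin p, i ≠ i' → ∀ x, x ∈ L i → x ∉ L i' :=
        fun i i' h x hx => Finset.disjoint_left.mp (hdisj i i' h) hx
      have hTj : T ∩ L j = insert c (S ∩ L j) := by
        ext x
        simp only [hT, Finset.mem_inter, Finset.mem_insert, Finset.mem_erase]
        constructor
        · rintro ⟨hx1 | ⟨_, hx2⟩, hx3⟩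
          · exact Or.inl hx1
          · exact Or.inr ⟨hx2, hx3⟩
        · rintro (rfl | ⟨hx1, hx2⟩)
          · exact ⟨Or.inl rfl, hcLj⟩
          · have : x ≠ d := fun h => (hdis j k hjk x hx2) (h ▸ hdLk)
            exact ⟨Or.inr ⟨this, hx1⟩, hx2⟩
      have hTk : T ∩ L k = (S ∩ L k).erase d := by
        ext x
        simp only [hT, Finset.mem_inter, Finset.mem_insert, Finset.mem_erase]
        constructor
        · rintro ⟨hx1 | ⟨hx1, hx2⟩, hx3⟩
          · exact absurd hx3 (hx1 ▸ hdis j k hjk c hcLj)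
          · exact ⟨hx1, hx2, hx3⟩
        · rintro ⟨hx1, hx2, hx3⟩
          exact ⟨Or.inr ⟨hx1, hx2⟩, hx3⟩
      have hTi : ∀ i, i ≠ j → i ≠ k → T ∩ L i = S ∩ L i := by
        intro i hij hik
        ext x
        simp only [hT, Finset.mem_inter, Finset.mem_insert, Finset.mem_erase]
        constructor
        · rintro ⟨hx1 | ⟨hx1, hx2⟩, hx3⟩
          · exact absurd hx3 (hx1 ▸ hdis j i (Ne.symm hij) c hcLj)
          · exact ⟨hx2, hx3⟩
        · rintro ⟨hx1, hx2⟩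
          have : x ≠ d := fun h => (hdis i k hik x hx2) (h ▸ hdLk)
          exact ⟨Or.inr ⟨this, hx1⟩, hx2⟩
      have hineq := hopt T hTcard
      rw [thieleF_party, thieleF_party] at hineq
      -- split the sums at j, k
      have hsplit : ∀ g : Fin p → ℝ,
          ∑ i, g i = g j + g k + ∑ i ∈ Finset.univ \ {j, k}, g i := by
        intro g
        rw [← Finset.sum_sdiff (Finset.subset_univ ({j, k} : Finset (Fin p))),
          Finset.sum_pair hjk]
        ring
      rw [hsplit (fun i => (v i : ℝ) * harm ((T ∩ L i).card)),
        hsplit (fun i => (v i : ℝ) * harm ((S ∩ L i).card))] at hineq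
      have hrest : ∑ i ∈ Finset.univ \ {j, k}, (v i : ℝ) * harm ((T ∩ L i).card)
          = ∑ i ∈ Finset.univ \ {j, k}, (v i : ℝ) * harm ((S ∩ L i).card) := by
        apply Finset.sum_congr rfl
        intro i hi
        simp only [Finset.mem_sdiff, Finset.mem_insert, Finset.mem_singleton] at hi
        rw [hTi i (fun h => hi.2 (Or.inl h)) (fun h => hi.2 (Or.inr h))]
      rw [hrest] at hineq
      have hcardj : (T ∩ L j).card = m j + 1 := by
        rw [hTj, Finset.card_insert_of_notMem hcn]
      have hcardk : (T ∩ L k).card = m k - 1 := by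
        rw [hTk, Finset.card_erase_of_mem hd]
      obtain ⟨n, hn⟩ : ∃ n, m k = n + 1 := ⟨m k - 1, by omega⟩
      rw [hcardj, hcardk, hn] at hineq
      simp only [Nat.add_sub_cancel] at hineq
      rw [harm_succ (m j)] at hineq
      rw [show (S ∩ L k).card = n + 1 from hn, harm_succ n] at hineq
      have hrr : (v j : ℝ) * (1/((m j:ℝ)+1)) ≤ (v k : ℝ) * (1/((n:ℝ)+1)) := by
        nlinarith [hineq]
      have hdivr : (v j : ℝ)/(((m j + 1 : ℕ)):ℝ) ≤ (v k : ℝ)/(((n+1 : ℕ)):ℝ) := by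
        push_cast
        rw [div_eq_mul_one_div (v j : ℝ) ((m j:ℝ)+1), div_eq_mul_one_div (v k : ℝ) ((n:ℝ)+1)]
        exact hrr
      have := (div_le_div_nat (K := ℝ) (Nat.succ_pos (m j)) (Nat.succ_pos n)).mp hdivr
      rw [hn]
      exact this
  · rintro ⟨-, hdh⟩
    refine ⟨hS, ?_⟩
    intro T hT
    rw [thieleF_party, thieleF_party]
    apply dhondt_max v m (fun j => (T ∩ L j).card) hv
    · rw [card_sum_parts L hdisj hcover T, hT, ← hsumM]
    · by_contra hno
      push_neg at hno
      have : ∑ j, m j = 0 := by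
        apply Finset.sum_eq_zero
        intro j _
        exact Nat.lt_one_iff.mp (hno j)
      rw [hsumM] at this
      omega
    · intro j k hk
      have := hdh j k hk
      rw [show ((m j : ℚ) + 1) = ((m j + 1 : ℕ) : ℚ) by push_cast; ring] at this
      exact (div_le_div_nat (Nat.succ_pos _) hk).mp this
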